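/- Let H be a real Hilbert space with orthogonal projection P onto a closed subspace, and let f, g ∈ H be nonzero with ‖Pf‖²/‖f‖² ∈ {0, 1}. Then |‖Pf‖²/‖f‖² − ‖Pg‖²/‖g‖²| ≤ ‖f − g‖²/‖f‖². -/

import Mathlib

private lemma key_ineq (a b c e : ℝ) (hc : 0 < c) (hab : 0 < a ^ 2 + b ^ 2)
    (he : a ^ 2 + (c - b) ^ 2 ≤ e) :
    a ^ 2 / (a ^ 2 + b ^ 2) ≤ e / c ^ 2 := by
  rw [div_le_div_iff₀ hab (by positivity)]
  nlinarith [sq_nonneg (a ^ 2 - b * (c - b)), sq_nonneg a, sq_nonneg (c - b)]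

theorem stmt_5 {H : Type*} [NormedAddCommGroup H] [InnerProductSpace ℝ H] [CompleteSpace H]
    (K : Submodule ℝ H) [CompleteSpace K]
    (f g : H) (hf : f ≠ 0) (hg : g ≠ 0)
    (hS : ‖(K.orthogonalProjectionOnto f : H)‖ ^ 2 / ‖f‖ ^ 2 = 0 ∨
          ‖(K.orthogonalProjectionOnto f : H)‖ ^ 2 / ‖f‖ ^ 2 = 1) :
    |‖(K.orthogonalProjectionOnto f : H)‖ ^ 2 / ‖f‖ ^ 2 -
        ‖(K.orthogonalProjectionOnto g : H)‖ ^ 2 / ‖g‖ ^ 2| ≤ ‖f - g‖ ^ 2 / ‖f‖ ^ 2 := by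
  have hfc : (0:ℝ) < ‖f‖ := norm_pos_iff.mpr hf
  have hgc : (0:ℝ) < ‖g‖ := norm_pos_iff.mpr hg
  set P := fun x : H => (K.orthogonalProjectionOnto x : H) with hP
  set Q := fun x : H => (Kᗮ.orthogonalProjectionOnto x : H) with hQ
  have hQeq : ∀ x : H, Q x = x - P x := fun x => Submodule.starProjection_orthogonal_val x
  have hdecf : ‖f‖ ^ 2 = ‖P f‖ ^ 2 + ‖Q f‖ ^ 2 := Submodule.norm_sq_eq_add_norm_sq_projection f K
  have hdecg : ‖g‖ ^ 2 = ‖P g‖ ^ 2 + ‖Q g‖ ^ 2 := Submodule.norm_sq_eq_add_norm_sq_projection g K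
  have hdece : ‖f - g‖ ^ 2 = ‖P f - P g‖ ^ 2 + ‖Q f - Q g‖ ^ 2 := by
    have h := Submodule.norm_sq_eq_add_norm_sq_projection (f - g) K
    have e1 : (K.orthogonalProjectionOnto (f - g) : H) = P f - P g := map_sub (K.subtypeL.comp K.orthogonalProjectionOnto) f g
    have e2 : (Kᗮ.orthogonalProjectionOnto (f - g) : H) = Q f - Q g := map_sub (Kᗮ.subtypeL.comp (Kᗮ.orthogonalProjectionOnto)) f g
    rw [← Submodule.norm_coe, ← Submodule.norm_coe (Kᗮ.orthogonalProjectionOnto (f - g)), e1, e2] at h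
    exact h
  have hgn : (0:ℝ) < ‖P g‖ ^ 2 + ‖Q g‖ ^ 2 := by rw [← hdecg]; positivity
  rcases hS with h0 | h1
  · -- case S = 0 : P f = 0
    have hpf : ‖P f‖ = 0 := by
      have := (div_eq_zero_iff.mp h0).resolve_right (by positivity)
      exact pow_eq_zero_iff (n := 2) (by norm_num) |>.mp this
    have hqf : ‖Q f‖ = ‖f‖ := by nlinarith [norm_nonneg (Q f), norm_nonneg f]
    have hPfg : ‖P g‖ ≤ ‖P f - P g‖ := by
      calc ‖P g‖ = ‖P f - (P f - P g)‖ := by rw [sub_sub_cancel]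
        _ ≤ ‖P f‖ + ‖P f - P g‖ := norm_sub_le _ _
        _ = ‖P f - P g‖ := by rw [hpf]; ring
    have hQfg : |‖f‖ - ‖Q g‖| ≤ ‖Q f - Q g‖ := by
      rw [← hqf]; exact abs_norm_sub_norm_le _ _
    have he : ‖P g‖ ^ 2 + (‖f‖ - ‖Q g‖) ^ 2 ≤ ‖f - g‖ ^ 2 := by
      rw [hdece]
      have h1 : ‖P g‖ ^ 2 ≤ ‖P f - P g‖ ^ 2 :=
        pow_le_pow_left₀ (norm_nonneg _) hPfg 2
      have h2 : (‖f‖ - ‖Q g‖) ^ 2 ≤ ‖Q f - Q g‖ ^ 2 := by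
        rw [← sq_abs]; apply pow_le_pow_left₀ (abs_nonneg _) hQfg
      linarith
    rw [h0, zero_sub, abs_neg, abs_of_nonneg (by positivity)]
    calc ‖P g‖ ^ 2 / ‖g‖ ^ 2 = ‖P g‖ ^ 2 / (‖P g‖ ^ 2 + ‖Q g‖ ^ 2) := by rw [hdecg]
      _ ≤ ‖f - g‖ ^ 2 / ‖f‖ ^ 2 := key_ineq _ _ _ _ hfc hgn he
  · -- case S = 1 : Q f = 0
    have hpf2 : ‖P f‖ ^ 2 = ‖f‖ ^ 2 := by
      rw [div_eq_one_iff_eq (by positivity)] at h1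
      exact h1
    have hpf : ‖P f‖ = ‖f‖ := (sq_eq_sq₀ (norm_nonneg _) (norm_nonneg _)).mp hpf2
    have hq2 : ‖Q f‖ ^ 2 = 0 := by linarith
    have hqf : ‖Q f‖ = 0 := pow_eq_zero_iff (n := 2) (by norm_num) |>.mp hq2
    have hQfg : ‖Q g‖ ≤ ‖Q f - Q g‖ := by
      calc ‖Q g‖ = ‖Q f - (Q f - Q g)‖ := by rw [sub_sub_cancel]
        _ ≤ ‖Q f‖ + ‖Q f - Q g‖ := norm_sub_le _ _
        _ = ‖Q f - Q g‖ := by rw [hqf]; ring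
    have hPfg : |‖f‖ - ‖P g‖| ≤ ‖P f - P g‖ := by
      rw [← hpf]; exact abs_norm_sub_norm_le _ _
    have he : ‖Q g‖ ^ 2 + (‖f‖ - ‖P g‖) ^ 2 ≤ ‖f - g‖ ^ 2 := by
      rw [hdece]
      have h2 : ‖Q g‖ ^ 2 ≤ ‖Q f - Q g‖ ^ 2 :=
        pow_le_pow_left₀ (norm_nonneg _) hQfg 2
      have h3 : (‖f‖ - ‖P g‖) ^ 2 ≤ ‖P f - P g‖ ^ 2 := by
        rw [← sq_abs]; apply pow_le_pow_left₀ (abs_nonneg _) hPfg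
      linarith
    have hsub : ‖(K.orthogonalProjectionOnto f : H)‖ ^ 2 / ‖f‖ ^ 2 -
        ‖(K.orthogonalProjectionOnto g : H)‖ ^ 2 / ‖g‖ ^ 2 =
        ‖Q g‖ ^ 2 / (‖Q g‖ ^ 2 + ‖P g‖ ^ 2) := by
      rw [h1, show (‖(K.orthogonalProjectionOnto g : H)‖ : ℝ) = ‖P g‖ from rfl, hdecg]
      have hne : ‖P g‖ ^ 2 + ‖Q g‖ ^ 2 ≠ 0 := hgn.ne'
      have hne' : ‖Q g‖ ^ 2 + ‖P g‖ ^ 2 ≠ 0 := by rw [add_comm]; exact hne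
      field_simp
      ring_nf
    rw [hsub, abs_of_nonneg (by positivity)]
    exact key_ineq _ _ _ _ hfc (by linarith) he
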